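/- With notation as above, lim_{k→∞} c_p(p^k) = 1/2 and lim_{k→∞} c_p(2 p^k) = 3/2^{θ_p + 1}. -/

import Mathlib

open Filter

/-- `N_p(u)`: number of `(m,n)` with `m ≥ n ≥ 0`, `p ∤ C(m,n)` and `m + n < u`. -/
noncomputable def Npas (p : ℕ) (u : ℕ) : ℕ :=
  {mn : ℕ × ℕ | mn.2 ≤ mn.1 ∧ mn.1 + mn.2 < u ∧ ¬ p ∣ Nat.choose mn.1 mn.2}.ncard

/-- `θ_p = log(p(p+1)/2)/log p`. -/
noncomputable def theta (p : ℕ) : ℝ := Real.log (p * (p + 1) / 2) / Real.log p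

/-- `c_p(u) = N_p(u)/u^{θ_p}`. -/
noncomputable def cpas (p : ℕ) (u : ℕ) : ℝ := (Npas p u : ℝ) / (u : ℝ) ^ theta p

open Filter Finset

namespace CpasAux

variable (p : ℕ)

/-- pairs `(m,n)` with `m+n ≤ c` and `p ∤ C(m,n)` -/
def Cle (c : ℕ) : Finset (ℕ × ℕ) :=
  (range (c+1) ×ˢ range (c+1)).filter fun mn => mn.1 + mn.2 ≤ c ∧ ¬ p ∣ Nat.choose mn.1 mn.2

/-- pairs `(m,n)` with `m+n = c` and `p ∤ C(m,n)` -/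
def Ceq (c : ℕ) : Finset (ℕ × ℕ) :=
  (range (c+1) ×ˢ range (c+1)).filter fun mn => mn.1 + mn.2 = c ∧ ¬ p ∣ Nat.choose mn.1 mn.2

lemma mem_Cle {c : ℕ} {mn : ℕ × ℕ} :
    mn ∈ Cle p c ↔ mn.1 + mn.2 ≤ c ∧ ¬ p ∣ Nat.choose mn.1 mn.2 := by
  simp only [Cle, mem_filter, mem_product, mem_range]
  constructor
  · rintro ⟨_, h⟩; exact h
  · rintro ⟨h1, h2⟩; exact ⟨⟨by omega, by omega⟩, h1, h2⟩

lemma mem_Ceq {c : ℕ} {mn : ℕ × ℕ} :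
    mn ∈ Ceq p c ↔ mn.1 + mn.2 = c ∧ ¬ p ∣ Nat.choose mn.1 mn.2 := by
  simp only [Ceq, mem_filter, mem_product, mem_range]
  constructor
  · rintro ⟨_, h⟩; exact h
  · rintro ⟨h1, h2⟩; exact ⟨⟨by omega, by omega⟩, h1, h2⟩

/-- digit pairs `(x,y)` with `y ≤ x < p`, `x + y ≤ c`. -/
def Dle (c : ℕ) : Finset (ℕ × ℕ) :=
  (range p ×ˢ range p).filter fun xy => xy.2 ≤ xy.1 ∧ xy.1 + xy.2 ≤ c

/-- digit pairs `(x,y)` with `y ≤ x < p`, `x + y = c`. -/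
def Deq (c : ℕ) : Finset (ℕ × ℕ) :=
  (range p ×ˢ range p).filter fun xy => xy.2 ≤ xy.1 ∧ xy.1 + xy.2 = c

/-- all digit pairs `(x,y)` with `y ≤ x < p`. -/
def Dall : Finset (ℕ × ℕ) := (range p ×ˢ range p).filter fun xy => xy.2 ≤ xy.1

lemma mem_Dle {c : ℕ} {xy : ℕ × ℕ} :
    xy ∈ Dle p c ↔ xy.1 < p ∧ xy.2 ≤ xy.1 ∧ xy.1 + xy.2 ≤ c := by
  simp only [Dle, mem_filter, mem_product, mem_range]; omega

lemma mem_Deq {c : ℕ} {xy : ℕ × ℕ} :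
    xy ∈ Deq p c ↔ xy.1 < p ∧ xy.2 ≤ xy.1 ∧ xy.1 + xy.2 = c := by
  simp only [Deq, mem_filter, mem_product, mem_range]; omega

lemma mem_Dall {xy : ℕ × ℕ} : xy ∈ Dall p ↔ xy.1 < p ∧ xy.2 ≤ xy.1 := by
  simp only [Dall, mem_filter, mem_product, mem_range]; omega

end CpasAux

namespace CpasAux
variable {p : ℕ}

/-- Lucas-type splitting of non-divisibility. -/
lemma not_dvd_choose_iff (hp : p.Prime) (m n : ℕ) :
    ¬ p ∣ Nat.choose m n ↔ (¬ p ∣ Nat.choose (m / p) (n / p)) ∧ n % p ≤ m % p := by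
  haveI : Fact p.Prime := ⟨hp⟩
  have hmod : Nat.choose m n ≡ Nat.choose (m % p) (n % p) * Nat.choose (m / p) (n / p) [MOD p] :=
    Choose.choose_modEq_choose_mod_mul_choose_div_nat
  have hdvd : p ∣ Nat.choose m n ↔
      p ∣ Nat.choose (m % p) (n % p) * Nat.choose (m / p) (n / p) := by
    constructor
    · intro h; exact (Nat.modEq_zero_iff_dvd).mp (hmod.symm.trans ((Nat.modEq_zero_iff_dvd).mpr h))
    · intro h; exact (Nat.modEq_zero_iff_dvd).mp (hmod.trans ((Nat.modEq_zero_iff_dvd).mpr h))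
  have hdig : p ∣ Nat.choose (m % p) (n % p) ↔ ¬ (n % p ≤ m % p) := by
    constructor
    · intro h hle
      have h1 : Nat.choose (m % p) (n % p) ∣ (m % p).factorial :=
        ⟨(n % p).factorial * (m % p - n % p).factorial, by
          rw [← Nat.choose_mul_factorial_mul_factorial hle]; ring⟩
      have h2 : p ∣ (m % p).factorial := h.trans h1
      have := (Nat.Prime.dvd_factorial hp).mp h2
      have := Nat.mod_lt m hp.pos
      omega
    · intro h
      have : m % p < n % p := by omega
      simp [Nat.choose_eq_zero_of_lt this]
  rw [hdvd, hp.dvd_mul, hdig]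
  tauto

/-- gluing map: `((a,b),(x,y)) ↦ (p*a+x, p*b+y)` -/
def glue (p : ℕ) (z : (ℕ × ℕ) × (ℕ × ℕ)) : ℕ × ℕ := (p * z.1.1 + z.2.1, p * z.1.2 + z.2.2)

lemma mem_glue_image (hp : 0 < p) (S T : Finset (ℕ × ℕ))
    (hT : ∀ xy ∈ T, xy.1 < p ∧ xy.2 < p) (mn : ℕ × ℕ) :
    mn ∈ (S ×ˢ T).image (glue p) ↔ (mn.1 / p, mn.2 / p) ∈ S ∧ (mn.1 % p, mn.2 % p) ∈ T := by
  simp only [mem_image, mem_product]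
  constructor
  · rintro ⟨⟨⟨a, b⟩, ⟨x, y⟩⟩, ⟨hS, hTm⟩, rfl⟩
    obtain ⟨hx, hy⟩ := hT _ hTm
    simp only [glue]
    rw [Nat.mul_add_div hp, Nat.mul_add_div hp, Nat.div_eq_of_lt hx, Nat.div_eq_of_lt hy,
      Nat.mul_add_mod, Nat.mul_add_mod, Nat.mod_eq_of_lt hx, Nat.mod_eq_of_lt hy]
    simpa using ⟨hS, hTm⟩
  · rintro ⟨hS, hTm⟩
    refine ⟨((mn.1 / p, mn.2 / p), (mn.1 % p, mn.2 % p)), ⟨hS, hTm⟩, ?_⟩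
    simp [glue, Nat.div_add_mod]

lemma card_glue_image (hp : 0 < p) (S T : Finset (ℕ × ℕ))
    (hT : ∀ xy ∈ T, xy.1 < p ∧ xy.2 < p) :
    ((S ×ˢ T).image (glue p)).card = S.card * T.card := by
  rw [Finset.card_image_of_injOn, Finset.card_product]
  rintro ⟨⟨a, b⟩, ⟨x, y⟩⟩ h ⟨⟨a', b'⟩, ⟨x', y'⟩⟩ h' heq
  simp only [mem_coe, mem_product] at h h'
  obtain ⟨hx, hy⟩ := hT _ h.2
  obtain ⟨hx', hy'⟩ := hT _ h'.2
  simp only [glue, Prod.mk.injEq] at heq ⊢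
  obtain ⟨h1, h2⟩ := heq
  have e1 : a = a' ∧ x = x' := by
    constructor
    · have := congrArg (· / p) h1
      simpa [Nat.mul_add_div hp, Nat.div_eq_of_lt hx, Nat.div_eq_of_lt hx'] using this
    · have := congrArg (· % p) h1
      simpa [Nat.mul_add_mod, Nat.mod_eq_of_lt hx, Nat.mod_eq_of_lt hx'] using this
  have e2 : b = b' ∧ y = y' := by
    constructor
    · have := congrArg (· / p) h2
      simpa [Nat.mul_add_div hp, Nat.div_eq_of_lt hy, Nat.div_eq_of_lt hy'] using this
    · have := congrArg (· % p) h2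
      simpa [Nat.mul_add_mod, Nat.mod_eq_of_lt hy, Nat.mod_eq_of_lt hy'] using this
  exact ⟨⟨e1.1, e2.1⟩, e1.2, e2.2⟩

end CpasAux

namespace CpasAux
variable {p : ℕ}

lemma eq_digit {p a s c : ℕ} (hp : 2 ≤ p) (hs : s ≤ 2*p-2) :
    p*a + s = p*c + (p-1) ↔ a = c ∧ s = p-1 := by
  constructor
  · intro h
    rcases lt_or_ge s p with hsp | hsp
    · have h1 := congrArg (· / p) h
      have h2 := congrArg (· % p) h
      simp only [Nat.mul_add_div (by omega : 0 < p), Nat.mul_add_mod] at h1 h2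
      rw [Nat.div_eq_of_lt hsp, Nat.div_eq_of_lt (by omega)] at h1
      rw [Nat.mod_eq_of_lt hsp, Nat.mod_eq_of_lt (by omega)] at h2
      omega
    · exfalso
      have h' : p * (a+1) + (s - p) = p * c + (p-1) := by
        have e : p * (a+1) = p*a + p := by ring
        omega
      have h2 := congrArg (· % p) h'
      simp only [Nat.mul_add_mod] at h2
      rw [Nat.mod_eq_of_lt (by omega), Nat.mod_eq_of_lt (by omega)] at h2
      omega
  · rintro ⟨rfl, rfl⟩; rfl

lemma le_digit {p a s c : ℕ} (hp : 2 ≤ p) (hs : s ≤ 2*p-2) :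
    p*a + s ≤ p*c + (2*p-2) ↔ a ≤ c ∨ (a = c + 1 ∧ s ≤ p - 2) := by
  constructor
  · intro h
    rcases le_or_gt a c with h1 | h1
    · exact Or.inl h1
    · right
      have h3 : a ≤ c + 1 := by
        by_contra h3
        have h4 : p * (c+2) ≤ p * a := Nat.mul_le_mul_left p (by omega)
        have e : p * (c+2) = p*c + 2*p := by ring
        omega
      have ha : a = c + 1 := by omega
      refine ⟨ha, ?_⟩
      rw [ha] at h
      have e : p * (c+1) = p*c + p := by ring
      omega
  · intro h
    rcases h with h | ⟨ha, hss⟩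
    · have : p * a ≤ p * c := Nat.mul_le_mul_left p h
      omega
    · rw [ha]
      have e : p * (c+1) = p*c + p := by ring
      omega

/-- decomposition of a pair into quotient pair and digit pair -/
lemma sum_decomp (hp : 0 < p) (m n : ℕ) :
    m + n = p * (m / p + n / p) + (m % p + n % p) := by
  have h1 := Nat.div_add_mod m p
  have h2 := Nat.div_add_mod n p
  have e : p * (m / p + n / p) = p * (m / p) + p * (n / p) := by ring
  omega

lemma digit_sum_le (hp : 0 < p) (m n : ℕ) : m % p + n % p ≤ 2*p - 2 := by
  have h1 := Nat.mod_lt m hp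
  have h2 := Nat.mod_lt n hp
  omega

/-- Recursion for the `Ceq` sets. -/
lemma Ceq_rec (hp : p.Prime) (c : ℕ) :
    (Ceq p (p * c + (p-1))).card = (Ceq p c).card * (Deq p (p-1)).card := by
  have hp2 := hp.two_le
  have hp0 : 0 < p := hp.pos
  have hDsub : ∀ xy ∈ Deq p (p-1), xy.1 < p ∧ xy.2 < p := by
    intro xy hxy
    rw [mem_Deq] at hxy
    omega
  rw [← card_glue_image hp0 _ _ hDsub]
  congr 1
  ext mn
  rw [mem_glue_image hp0 _ _ hDsub, mem_Ceq, mem_Ceq, mem_Deq,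
    not_dvd_choose_iff hp]
  have hdsum := digit_sum_le hp0 mn.1 mn.2
  have hdecomp := sum_decomp hp0 mn.1 mn.2
  have hmod := Nat.mod_lt mn.1 hp0
  constructor
  · rintro ⟨hsum, hdvd, hle⟩
    rw [hdecomp] at hsum
    obtain ⟨h1, h2⟩ := (eq_digit hp2 hdsum).mp hsum
    exact ⟨⟨h1, hdvd⟩, by omega⟩
  · rintro ⟨⟨h1, hdvd⟩, hmp, hle, h2⟩
    refine ⟨?_, hdvd, hle⟩
    rw [hdecomp, h1, h2]

/-- Recursion for the `Cle` sets. -/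
lemma Cle_rec (hp : p.Prime) (c : ℕ) :
    (Cle p (p * c + (2*p-2))).card =
      (Cle p c).card * (Dall p).card + (Ceq p (c+1)).card * (Dle p (p-2)).card := by
  have hp2 := hp.two_le
  have hp0 : 0 < p := hp.pos
  have hDall : ∀ xy ∈ Dall p, xy.1 < p ∧ xy.2 < p := by
    intro xy hxy; rw [mem_Dall] at hxy; omega
  have hDle : ∀ xy ∈ Dle p (p-2), xy.1 < p ∧ xy.2 < p := by
    intro xy hxy; rw [mem_Dle] at hxy; omega
  rw [← card_glue_image hp0 (Cle p c) _ hDall, ← card_glue_image hp0 (Ceq p (c+1)) _ hDle]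
  rw [← Finset.card_union_of_disjoint]
  · congr 1
    ext mn
    rw [Finset.mem_union, mem_glue_image hp0 _ _ hDall, mem_glue_image hp0 _ _ hDle,
      mem_Cle, mem_Cle, mem_Ceq, mem_Dall, mem_Dle, not_dvd_choose_iff hp]
    have hdsum := digit_sum_le hp0 mn.1 mn.2
    have hdecomp := sum_decomp hp0 mn.1 mn.2
    have hmod := Nat.mod_lt mn.1 hp0
    constructor
    · rintro ⟨hsum, hdvd, hle⟩
      rw [hdecomp] at hsum
      rcases (le_digit hp2 hdsum).mp hsum with h | ⟨h1, h2⟩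
      · exact Or.inl ⟨⟨h, hdvd⟩, by omega⟩
      · exact Or.inr ⟨⟨h1, hdvd⟩, by omega⟩
    · rintro (⟨⟨h1, hdvd⟩, _, hle⟩ | ⟨⟨h1, hdvd⟩, _, hle, h2⟩)
      · refine ⟨?_, hdvd, hle⟩
        rw [hdecomp]
        exact (le_digit hp2 hdsum).mpr (Or.inl h1)
      · refine ⟨?_, hdvd, hle⟩
        rw [hdecomp]
        exact (le_digit hp2 hdsum).mpr (Or.inr ⟨h1, h2⟩)
  · rw [Finset.disjoint_left]
    intro mn h1 h2
    rw [mem_glue_image hp0 _ _ hDall, mem_Cle] at h1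
    rw [mem_glue_image hp0 _ _ hDle, mem_Ceq] at h2
    omega

end CpasAux

namespace CpasAux
variable {p : ℕ}

lemma not_dvd_choose_small (hp : p.Prime) {m n : ℕ} (hm : m < p) (hn : n ≤ m) :
    ¬ p ∣ Nat.choose m n := by
  intro h
  have h1 : Nat.choose m n ∣ m.factorial :=
    ⟨n.factorial * (m - n).factorial, by
      rw [← Nat.choose_mul_factorial_mul_factorial hn]; ring⟩
  have h2 : p ∣ m.factorial := h.trans h1
  have := (Nat.Prime.dvd_factorial hp).mp h2
  omega

lemma n_le_m_of_not_dvd (hp : p.Prime) {m n : ℕ} (h : ¬ p ∣ Nat.choose m n) : n ≤ m := by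
  by_contra hc
  exact h (by simp [Nat.choose_eq_zero_of_lt (by omega : m < n)])

lemma Ceq_zero (hp : p.Prime) : (Ceq p 0).card = 1 := by
  have : Ceq p 0 = {(0, 0)} := by
    ext mn
    rw [mem_Ceq, Finset.mem_singleton]
    constructor
    · rintro ⟨h1, h2⟩
      have : mn.1 = 0 ∧ mn.2 = 0 := by omega
      exact Prod.ext this.1 this.2
    · rintro rfl
      exact ⟨rfl, by simpa using hp.one_lt.ne'⟩
  rw [this, Finset.card_singleton]

lemma Ceq_one (hp : p.Prime) : (Ceq p 1).card = 1 := by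
  have : Ceq p 1 = {(1, 0)} := by
    ext mn
    rw [mem_Ceq, Finset.mem_singleton]
    constructor
    · rintro ⟨h1, h2⟩
      have hle := n_le_m_of_not_dvd hp h2
      have : mn.1 = 1 ∧ mn.2 = 0 := by omega
      exact Prod.ext this.1 this.2
    · rintro rfl
      refine ⟨rfl, ?_⟩
      simpa using hp.one_lt.ne'
  rw [this, Finset.card_singleton]

lemma Cle_zero (hp : p.Prime) : (Cle p 0).card = 1 := by
  have : Cle p 0 = {(0, 0)} := by
    ext mn
    rw [mem_Cle, Finset.mem_singleton]
    constructor
    · rintro ⟨h1, h2⟩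
      have : mn.1 = 0 ∧ mn.2 = 0 := by omega
      exact Prod.ext this.1 this.2
    · rintro rfl
      exact ⟨le_refl _, by simpa using hp.one_lt.ne'⟩
  rw [this, Finset.card_singleton]

lemma Cle_base (hp : p.Prime) : (Cle p (p-2)).card = (Dle p (p-2)).card := by
  have hp2 := hp.two_le
  congr 1
  ext mn
  rw [mem_Cle, mem_Dle]
  constructor
  · rintro ⟨h1, h2⟩
    have hle := n_le_m_of_not_dvd hp h2
    exact ⟨by omega, hle, h1⟩
  · rintro ⟨h1, h2, h3⟩
    exact ⟨h3, not_dvd_choose_small hp h1 h2⟩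

lemma Dall_card : 2 * (Dall p).card = p * (p + 1) := by
  have h : Dall p = ((range p).sigma fun x => range (x+1)).image (fun z => (z.1, z.2)) := by
    ext ⟨x, y⟩
    simp only [mem_Dall, Finset.mem_image, Finset.mem_sigma, Finset.mem_range]
    constructor
    · rintro ⟨h1, h2⟩; exact ⟨⟨x, y⟩, ⟨h1, by show y < x + 1; omega⟩, rfl⟩
    · rintro ⟨⟨a, b⟩, ⟨h1, h2⟩, heq⟩
      dsimp only at h1 h2 heq
      obtain ⟨rfl, rfl⟩ : a = x ∧ b = y := by
        simpa [Prod.ext_iff] using heq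
      exact ⟨h1, by omega⟩
  have hinj : Function.Injective (fun z : (_ : ℕ) × ℕ => (z.1, z.2)) := by
    rintro ⟨a, b⟩ ⟨c, d⟩ h
    simp only [Prod.mk.injEq] at h
    obtain ⟨rfl, rfl⟩ := h
    rfl
  rw [h, Finset.card_image_of_injective _ hinj, Finset.card_sigma]
  simp only [Finset.card_range]
  have hs : ∑ x ∈ range p, (x + 1) = (∑ x ∈ range p, x) + p := by
    rw [Finset.sum_add_distrib, Finset.sum_const, Finset.card_range, smul_eq_mul, mul_one]
  have hg : (∑ x ∈ range p, x) * 2 = p * (p - 1) := Finset.sum_range_id_mul_two p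
  rcases Nat.eq_zero_or_pos p with rfl | hp0
  · simp
  · have e1 : p * (p - 1) = p * p - p := by rw [Nat.mul_sub, mul_one]
    have e2 : p * (p + 1) = p * p + p := by ring
    have e3 : p ≤ p * p := Nat.le_mul_of_pos_left _ hp0
    omega

/-- reflection: `q = 2s + r`. -/
lemma q_eq (hp : p.Prime) :
    (Dall p).card = 2 * (Dle p (p-2)).card + (Deq p (p-1)).card := by
  have hp2 := hp.two_le
  classical
  set Dgt : Finset (ℕ × ℕ) :=
    (range p ×ˢ range p).filter (fun xy => xy.2 ≤ xy.1 ∧ p ≤ xy.1 + xy.2) with hDgt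
  have mem_Dgt : ∀ xy : ℕ × ℕ, xy ∈ Dgt ↔ xy.1 < p ∧ xy.2 ≤ xy.1 ∧ p ≤ xy.1 + xy.2 := by
    intro xy
    simp only [hDgt, mem_filter, mem_product, mem_range]
    omega
  have hsplit : Dall p = (Dle p (p-2) ∪ Deq p (p-1)) ∪ Dgt := by
    ext xy
    simp only [Finset.mem_union, mem_Dall, mem_Dle, mem_Deq, mem_Dgt]
    omega
  have hd1 : Disjoint (Dle p (p-2)) (Deq p (p-1)) := by
    rw [Finset.disjoint_left]
    intro xy h1 h2
    rw [mem_Dle] at h1; rw [mem_Deq] at h2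
    omega
  have hd2 : Disjoint (Dle p (p-2) ∪ Deq p (p-1)) Dgt := by
    rw [Finset.disjoint_left]
    intro xy h1 h2
    rw [Finset.mem_union, mem_Dle, mem_Deq] at h1
    rw [mem_Dgt] at h2
    omega
  have hcard : (Dgt).card = (Dle p (p-2)).card := by
    apply Finset.card_bij (fun xy _ => ((p-1) - xy.2, (p-1) - xy.1))
    · intro xy hxy
      rw [mem_Dgt] at hxy
      rw [mem_Dle]
      omega
    · intro a ha b hb hab
      rw [mem_Dgt] at ha hb
      have h1 : (p-1) - a.2 = (p-1) - b.2 ∧ (p-1) - a.1 = (p-1) - b.1 := by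
        constructor
        · exact congrArg Prod.fst hab
        · exact congrArg Prod.snd hab
      have : a.1 = b.1 ∧ a.2 = b.2 := by omega
      exact Prod.ext this.1 this.2
    · intro b hb
      rw [mem_Dle] at hb
      refine ⟨((p-1) - b.2, (p-1) - b.1), ?_, ?_⟩
      · rw [mem_Dgt]
        simp only
        omega
      · have : (p-1) - ((p-1) - b.1) = b.1 ∧ (p-1) - ((p-1) - b.2) = b.2 := by omega
        exact Prod.ext this.1 this.2
  rw [hsplit, Finset.card_union_of_disjoint hd2, Finset.card_union_of_disjoint hd1, hcard]
  ring

end CpasAux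

namespace CpasAux
variable {p : ℕ}

lemma Cle_split (hp : p.Prime) (c : ℕ) :
    (Cle p (c+1)).card = (Cle p c).card + (Ceq p (c+1)).card := by
  have hsplit : Cle p (c+1) = Cle p c ∪ Ceq p (c+1) := by
    ext mn
    simp only [Finset.mem_union, mem_Cle, mem_Ceq]
    constructor
    · rintro ⟨h1, h2⟩
      rcases Nat.lt_or_ge (mn.1 + mn.2) (c+1) with h | h
      · exact Or.inl ⟨by omega, h2⟩
      · exact Or.inr ⟨by omega, h2⟩
    · rintro (⟨h1, h2⟩ | ⟨h1, h2⟩)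
      · exact ⟨by omega, h2⟩
      · exact ⟨by omega, h2⟩
  rw [hsplit, Finset.card_union_of_disjoint]
  rw [Finset.disjoint_left]
  intro mn h1 h2
  rw [mem_Cle] at h1; rw [mem_Ceq] at h2
  omega

lemma Ceq_pow (hp : p.Prime) (k : ℕ) :
    (Ceq p (p^k - 1)).card = (Deq p (p-1)).card ^ k := by
  induction k with
  | zero => simpa using Ceq_zero hp
  | succ k ih =>
    have hp1 : 1 ≤ p := hp.pos
    have h1 : 1 ≤ p ^ k := Nat.one_le_pow _ _ hp.pos
    have harith : p * (p^k - 1) + (p - 1) = p^(k+1) - 1 := by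
      have h2 : p * (p^k - 1) = p * p^k - p := by rw [Nat.mul_sub, mul_one]
      have h3 : p ≤ p * p^k := Nat.le_mul_of_pos_right _ (by positivity)
      rw [pow_succ, mul_comm (p^k) p]
      omega
    rw [← harith, Ceq_rec hp, ih, pow_succ]

lemma Ceq_two_pow (hp : p.Prime) (k : ℕ) :
    (Ceq p (2 * p^k - 1)).card = (Deq p (p-1)).card ^ k := by
  induction k with
  | zero => simpa using Ceq_one hp
  | succ k ih =>
    have hp1 : 1 ≤ p := hp.pos
    have h1 : 1 ≤ p ^ k := Nat.one_le_pow _ _ hp.pos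
    have harith : p * (2 * p^k - 1) + (p - 1) = 2 * p^(k+1) - 1 := by
      have e : p * (2 * p^k) = 2 * (p * p^k) := by ring
      have h2 : p * (2 * p^k - 1) = 2 * (p * p^k) - p := by
        rw [Nat.mul_sub, mul_one, e]
      have h3 : 2 * p^(k+1) = 2 * (p * p^k) := by rw [pow_succ]; ring
      have h4 : p ≤ p * p^k := Nat.le_mul_of_pos_right _ (by positivity)
      rw [h2, h3]
      obtain ⟨M, hM⟩ : ∃ M, M = p * p^k := ⟨_, rfl⟩
      rw [← hM] at h4 ⊢
      omega
    rw [← harith, Ceq_rec hp, ih, pow_succ]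

lemma Cle_pow (hp : p.Prime) (k : ℕ) (hk : 1 ≤ k) :
    2 * (Cle p (p^k - 2)).card + (Deq p (p-1)).card ^ k = (Dall p).card ^ k := by
  induction k, hk using Nat.le_induction with
  | base =>
    rw [pow_one, Cle_base hp, pow_one, q_eq hp]
    ring
  | succ k hk ih =>
    have hp2 := hp.two_le
    have h1 : 2 ≤ p ^ k := by
      calc 2 ≤ p := hp2
      _ = p ^ 1 := (pow_one p).symm
      _ ≤ p ^ k := Nat.pow_le_pow_right hp.pos hk
    have harith : p * (p^k - 2) + (2*p - 2) = p^(k+1) - 2 := by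
      have h2 : p * (p^k - 2) = p * p^k - 2*p := by rw [Nat.mul_sub]; ring_nf
      have h3 : 2*p ≤ p * p^k := by
        calc 2*p ≤ p*p := by nlinarith
        _ ≤ p * p^k := Nat.mul_le_mul_left p (by
            calc p = p^1 := (pow_one p).symm
            _ ≤ p^k := Nat.pow_le_pow_right hp.pos hk)
      rw [pow_succ, mul_comm (p^k) p]
      omega
    have hsum : p^k - 2 + 1 = p^k - 1 := by omega
    rw [← harith, Cle_rec hp, hsum, Ceq_pow hp]
    have e : (Dall p).card ^ (k+1)
        = (2 * (Cle p (p^k - 2)).card + (Deq p (p-1)).card ^ k) * (Dall p).card := by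
      rw [ih]; ring
    rw [e, q_eq hp, pow_succ]
    ring

lemma Cle_two_pow (hp : p.Prime) (k : ℕ) :
    2 * (Cle p (2 * p^k - 2)).card + (Deq p (p-1)).card ^ k = 3 * (Dall p).card ^ k := by
  induction k with
  | zero => simpa using Cle_zero hp
  | succ k ih =>
    have hp2 := hp.two_le
    have h1 : 1 ≤ p ^ k := Nat.one_le_pow _ _ hp.pos
    have harith : p * (2 * p^k - 2) + (2*p - 2) = 2 * p^(k+1) - 2 := by
      have e : p * (2 * p^k) = 2 * (p * p^k) := by ring
      have h2 : p * (2 * p^k - 2) = 2 * (p * p^k) - 2*p := by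
        rw [Nat.mul_sub, e]; ring_nf
      have h3 : 2 * p^(k+1) = 2 * (p * p^k) := by rw [pow_succ]; ring
      have h4 : p ≤ p * p^k := Nat.le_mul_of_pos_right _ (by positivity)
      rw [h2, h3]
      obtain ⟨M, hM⟩ : ∃ M, M = p * p^k := ⟨_, rfl⟩
      rw [← hM] at h4 ⊢
      omega
    have hsum : 2 * p^k - 2 + 1 = 2 * p^k - 1 := by omega
    rw [← harith, Cle_rec hp, hsum, Ceq_two_pow hp]
    have e : 3 * (Dall p).card ^ (k+1)
        = (2 * (Cle p (2 * p^k - 2)).card + (Deq p (p-1)).card ^ k) * (Dall p).card := by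
      rw [ih]; ring
    rw [e, q_eq hp, pow_succ]
    ring

lemma Npas_eq (hp : p.Prime) (u : ℕ) (hu : 1 ≤ u) : Npas p u = (Cle p (u-1)).card := by
  have hset : {mn : ℕ × ℕ | mn.2 ≤ mn.1 ∧ mn.1 + mn.2 < u ∧ ¬ p ∣ Nat.choose mn.1 mn.2}
      = ↑(Cle p (u-1)) := by
    ext mn
    simp only [Set.mem_setOf_eq, Finset.coe_filter, Finset.mem_coe, mem_Cle]
    constructor
    · rintro ⟨h1, h2, h3⟩
      exact ⟨by omega, h3⟩
    · rintro ⟨h1, h2⟩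
      exact ⟨n_le_m_of_not_dvd hp h2, by omega, h2⟩
  rw [Npas, hset, Set.ncard_coe_finset]

theorem count_one (hp : p.Prime) (k : ℕ) :
    2 * Npas p (p^k) = (Dall p).card ^ k + (Deq p (p-1)).card ^ k := by
  rcases Nat.eq_zero_or_pos k with rfl | hk
  · simp only [pow_zero]
    rw [Npas_eq hp 1 le_rfl]
    simpa using Cle_zero hp
  · have h2 : 2 ≤ p ^ k := by
      calc 2 ≤ p := hp.two_le
      _ = p ^ 1 := (pow_one p).symm
      _ ≤ p ^ k := Nat.pow_le_pow_right hp.pos hk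
    rw [Npas_eq hp _ (by omega)]
    have hsum : p^k - 1 = (p^k - 2) + 1 := by omega
    rw [hsum, Cle_split hp, ← hsum, Ceq_pow hp]
    have := Cle_pow hp k hk
    omega

theorem count_two (hp : p.Prime) (k : ℕ) :
    2 * Npas p (2 * p^k) = 3 * (Dall p).card ^ k + (Deq p (p-1)).card ^ k := by
  have h1 : 1 ≤ p ^ k := Nat.one_le_pow _ _ hp.pos
  rw [Npas_eq hp _ (by omega)]
  have hsum : 2 * p^k - 1 = (2 * p^k - 2) + 1 := by omega
  rw [hsum, Cle_split hp, ← hsum, Ceq_two_pow hp]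
  have := Cle_two_pow hp k
  omega

lemma r_lt_q (hp : p.Prime) : (Deq p (p-1)).card < (Dall p).card := by
  have hs : 0 < (Dle p (p-2)).card := by
    rw [Finset.card_pos]
    exact ⟨(0, 0), by rw [mem_Dle]; exact ⟨hp.pos, le_rfl, by omega⟩⟩
  have := q_eq hp
  omega

lemma r_pos (hp : p.Prime) : 0 < (Deq p (p-1)).card := by
  rw [Finset.card_pos]
  refine ⟨(p-1, 0), ?_⟩
  rw [mem_Deq]
  have := hp.two_le
  constructor
  · omega
  · constructor <;> omega

end CpasAux

namespace CpasAux
variable {p : ℕ}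

lemma Q_pos (hp : p.Prime) : 0 < (Dall p).card := by
  rw [Finset.card_pos]
  exact ⟨(0, 0), by rw [mem_Dall]; exact ⟨hp.pos, le_rfl⟩⟩

lemma Q_cast (hp : p.Prime) :
    ((Dall p).card : ℝ) = (p : ℝ) * ((p : ℝ) + 1) / 2 := by
  have h := Dall_card (p := p)
  have : ((2 * (Dall p).card : ℕ) : ℝ) = ((p * (p + 1) : ℕ) : ℝ) := by rw [h]
  push_cast at this
  linarith

lemma rpow_pk (hp : p.Prime) (k : ℕ) :
    ((p : ℝ) ^ k) ^ theta p = ((Dall p).card : ℝ) ^ k := by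
  have hp1 : (1 : ℝ) < (p : ℝ) := by exact_mod_cast hp.one_lt
  have hppos : (0 : ℝ) < (p : ℝ) := by linarith
  have hQpos : (0 : ℝ) < ((Dall p).card : ℝ) := by exact_mod_cast Q_pos hp
  have hlogp : Real.log p ≠ 0 := ne_of_gt (Real.log_pos hp1)
  have hlogQ : Real.log ((Dall p).card : ℝ) = Real.log ((p : ℝ) * ((p : ℝ) + 1) / 2) := by
    rw [Q_cast hp]
  rw [← Real.rpow_natCast (p : ℝ) k, ← Real.rpow_mul hppos.le,
    Real.rpow_def_of_pos hppos]
  have harg : Real.log p * ((k : ℝ) * theta p) = (k : ℝ) * Real.log ((Dall p).card : ℝ) := by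
    rw [theta, hlogQ]
    field_simp
  rw [harg, Real.exp_nat_mul, Real.exp_log hQpos]

lemma ratio_lt_one (hp : p.Prime) :
    ((Deq p (p-1)).card : ℝ) / ((Dall p).card : ℝ) < 1 := by
  have hQpos : (0 : ℝ) < ((Dall p).card : ℝ) := by exact_mod_cast Q_pos hp
  rw [div_lt_one hQpos]
  exact_mod_cast r_lt_q hp

lemma ratio_nonneg (hp : p.Prime) :
    (0:ℝ) ≤ ((Deq p (p-1)).card : ℝ) / ((Dall p).card : ℝ) := by positivity

end CpasAux

open CpasAux in
theorem cpas_limits' (p : ℕ) (hp : p.Prime) :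
    Tendsto (fun k : ℕ => cpas p (p ^ k)) atTop (nhds (1 / 2)) ∧
    Tendsto (fun k : ℕ => cpas p (2 * p ^ k)) atTop
      (nhds (3 / (2 : ℝ) ^ (theta p + 1))) := by
  set Q : ℝ := ((Dall p).card : ℝ) with hQ
  set R : ℝ := ((Deq p (p-1)).card : ℝ) with hR
  have hQpos : (0 : ℝ) < Q := by rw [hQ]; exact_mod_cast Q_pos hp
  have hratio : Tendsto (fun k : ℕ => (R / Q) ^ k) atTop (nhds 0) := by
    apply tendsto_pow_atTop_nhds_zero_of_lt_one (ratio_nonneg hp) (ratio_lt_one hp)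
  have h2pos : (0 : ℝ) < (2 : ℝ) ^ theta p := Real.rpow_pos_of_pos (by norm_num) _
  have h2exp : (2 : ℝ) ^ (theta p + 1) = (2 : ℝ) ^ theta p * 2 := by
    rw [Real.rpow_add (by norm_num), Real.rpow_one]
  constructor
  · have hfun : ∀ k : ℕ, cpas p (p ^ k) = 1 / 2 + (R / Q) ^ k * (1 / 2) := by
      intro k
      have hcount : 2 * (Npas p (p^k) : ℝ) = Q ^ k + R ^ k := by
        rw [hQ, hR]
        exact_mod_cast count_one hp k
      have hden : ((p ^ k : ℕ) : ℝ) ^ theta p = Q ^ k := by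
        push_cast
        exact rpow_pk hp k
      have hQk : (0:ℝ) < Q ^ k := pow_pos hQpos k
      have hN : (Npas p (p^k) : ℝ) = (Q ^ k + R ^ k) / 2 := by linarith
      rw [cpas, hden, hN, div_pow]
      field_simp
    rw [show (1 / 2 : ℝ) = 1 / 2 + (0 : ℝ) * (1 / 2) by ring]
    exact Tendsto.congr (fun k => (hfun k).symm)
      ((hratio.mul_const _).const_add _)
  · have hfun : ∀ k : ℕ, cpas p (2 * p ^ k)
        = 3 / (2 : ℝ) ^ (theta p + 1) + (R / Q) ^ k * (1 / (2 * (2 : ℝ) ^ theta p)) := by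
      intro k
      have hcount : 2 * (Npas p (2 * p^k) : ℝ) = 3 * Q ^ k + R ^ k := by
        rw [hQ, hR]
        exact_mod_cast count_two hp k
      have hppos : (0 : ℝ) ≤ (p : ℝ) := by positivity
      have hden : ((2 * p ^ k : ℕ) : ℝ) ^ theta p = (2 : ℝ) ^ theta p * Q ^ k := by
        push_cast
        rw [Real.mul_rpow (by norm_num) (by positivity), rpow_pk hp k]
      have hQk : (0:ℝ) < Q ^ k := pow_pos hQpos k
      have hN : (Npas p (2 * p^k) : ℝ) = (3 * Q ^ k + R ^ k) / 2 := by linarith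
      rw [cpas, hden, hN, h2exp, div_pow]
      field_simp
    rw [show (3 / (2:ℝ) ^ (theta p + 1) : ℝ)
      = 3 / (2:ℝ) ^ (theta p + 1) + (0 : ℝ) * (1 / (2 * (2 : ℝ) ^ theta p)) by ring]
    exact Tendsto.congr (fun k => (hfun k).symm)
      ((hratio.mul_const _).const_add _)

theorem cpas_limits (p : ℕ) (hp : p.Prime) :
    Tendsto (fun k : ℕ => cpas p (p ^ k)) atTop (nhds (1 / 2)) ∧
    Tendsto (fun k : ℕ => cpas p (2 * p ^ k)) atTop
      (nhds (3 / (2 : ℝ) ^ (theta p + 1))) := by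
  exact cpas_limits' p hp
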